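/- Let X₁,…,X₁₀ be positive reals each less than 2.2636302, with X₁ > 1, X₁X₂⋯X₁₀ = 1, Xᵢ > 1 for i ∈ {4, 7, 10}, and X₁₀ ≤ X₁. Then 4X₁ - X₁³/(X₂X₃) + 4X₄ - X₄³/(X₅X₆) + 4X₇ - X₇³/(X₈X₉) + X₁₀ ≤ 10. -/

import Mathlib

private lemma amgm3' (u v w : ℝ) (hu : 0 ≤ u) (hv : 0 ≤ v) (hw : 0 ≤ w) :
    27 * (u * v * w) ≤ (u + v + w)^3 := by
  nlinarith [sq_nonneg (u-v), sq_nonneg (v-w), sq_nonneg (u-w),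
    mul_nonneg hu hv, mul_nonneg hv hw, mul_nonneg hu hw,
    mul_nonneg (mul_nonneg hu hv) hw,
    mul_nonneg (add_nonneg (add_nonneg hu hv) hw) (sq_nonneg (u-v)),
    mul_nonneg (add_nonneg (add_nonneg hu hv) hw) (sq_nonneg (v-w)),
    mul_nonneg (add_nonneg (add_nonneg hu hv) hw) (sq_nonneg (u-w))]

private lemma chord3 (g x : ℝ) (hg : 1 < g) (hx1 : 1 ≤ x) (hxg : x ≤ g) :
    (4*g + x - 2)^3 ≤ 27 * (g^4 * x) := by
  have hA : (4*g-1)^3 ≤ 27*g^4 := by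
    nlinarith [sq_nonneg (g-1), mul_nonneg (sq_nonneg (g-1)) (sub_nonneg.2 hg.le), sq_nonneg (3*g-1)]
  have hB : (5*g-2)^3 ≤ 27*g^5 := by
    nlinarith [sq_nonneg (g-1), mul_nonneg (sq_nonneg (g-1)) (sub_nonneg.2 hg.le),
      mul_nonneg (mul_nonneg (sq_nonneg (g-1)) (sub_nonneg.2 hg.le)) (sub_nonneg.2 hg.le),
      mul_nonneg (sq_nonneg (g-1)) (sq_nonneg g)]
  have hid : (g-1)*(27*(g^4*x) - (4*g+x-2)^3)
      = (g-x)*(27*g^4 - (4*g-1)^3) + (x-1)*(27*g^5 - (5*g-2)^3)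
        + (g-1)*(x-1)*(g-x)*(13*g + x - 5) := by ring
  nlinarith [mul_nonneg (sub_nonneg.2 hxg) (sub_nonneg.2 hA),
    mul_nonneg (sub_nonneg.2 hx1) (sub_nonneg.2 hB),
    mul_nonneg (mul_nonneg (mul_nonneg (sub_nonneg.2 hg.le) (sub_nonneg.2 hx1)) (sub_nonneg.2 hxg))
      (by nlinarith : (0:ℝ) ≤ 13*g + x - 5),
    sub_pos.2 hg]

set_option maxHeartbeats 1000000 in
theorem stmt_5 (X₁ X₂ X₃ X₄ X₅ X₆ X₇ X₈ X₉ X₁₀ : ℝ)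
    (hpos : 0 < X₁ ∧ 0 < X₂ ∧ 0 < X₃ ∧ 0 < X₄ ∧ 0 < X₅ ∧ 0 < X₆ ∧ 0 < X₇ ∧ 0 < X₈ ∧ 0 < X₉ ∧ 0 < X₁₀)
    (hub : X₁ < 2.2636302 ∧ X₂ < 2.2636302 ∧ X₃ < 2.2636302 ∧ X₄ < 2.2636302 ∧ X₅ < 2.2636302 ∧
      X₆ < 2.2636302 ∧ X₇ < 2.2636302 ∧ X₈ < 2.2636302 ∧ X₉ < 2.2636302 ∧ X₁₀ < 2.2636302)
    (h1 : 1 < X₁)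
    (hprod : X₁ * X₂ * X₃ * X₄ * X₅ * X₆ * X₇ * X₈ * X₉ * X₁₀ = 1)
    (hgt : 1 < X₄ ∧ 1 < X₇ ∧ 1 < X₁₀)
    (h10 : X₁₀ ≤ X₁) :
    4 * X₁ - X₁ ^ 3 / (X₂ * X₃) + 4 * X₄ - X₄ ^ 3 / (X₅ * X₆) +
      4 * X₇ - X₇ ^ 3 / (X₈ * X₉) + X₁₀ ≤ 10 := by
  obtain ⟨p1, p2, p3, p4, p5, p6, p7, p8, p9, p10⟩ := hpos
  obtain ⟨g4, g7, g10⟩ := hgt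
  set z₁ := X₁ ^ 3 / (X₂ * X₃) with hz₁
  set z₂ := X₄ ^ 3 / (X₅ * X₆) with hz₂
  set z₃ := X₇ ^ 3 / (X₈ * X₉) with hz₃
  have hz1p : 0 < z₁ := by positivity
  have hz2p : 0 < z₂ := by positivity
  have hz3p : 0 < z₃ := by positivity
  set g := X₁ * X₄ * X₇ with hgdef
  have hg1 : 1 < g := by
    rw [hgdef]
    nlinarith [mul_nonneg (sub_nonneg.2 h1.le) (sub_nonneg.2 g4.le),
      mul_nonneg (mul_nonneg (sub_nonneg.2 h1.le) (sub_nonneg.2 g4.le)) (sub_nonneg.2 g7.le),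
      mul_nonneg (sub_nonneg.2 g4.le) (sub_nonneg.2 g7.le)]
  have hP : (0:ℝ) < g ^ 4 * X₁₀ := by positivity
  have key : z₁ * z₂ * z₃ = g ^ 4 * X₁₀ := by
    rw [hz₁, hz₂, hz₃, hgdef]
    field_simp
    linear_combination (-1:ℝ) * hprod
  set t := (g ^ 4 * X₁₀) ^ ((1:ℝ)/3) with htdef
  have ht : 0 < t := Real.rpow_pos_of_pos hP _
  have ht3 : t ^ 3 = g ^ 4 * X₁₀ := by
    rw [htdef, ← Real.rpow_natCast ((g ^ 4 * X₁₀) ^ ((1:ℝ)/3)) 3, ← Real.rpow_mul hP.le]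
    norm_num
  -- AM-GM: 3t ≤ z₁ + z₂ + z₃
  have e3t : (3*t)^3 = 27 * (g ^ 4 * X₁₀) := by
    rw [show (3*t)^3 = 27*t^3 by ring, ht3]
  have hS : 3 * t ≤ z₁ + z₂ + z₃ := by
    have h27 : (3*t)^3 ≤ (z₁ + z₂ + z₃)^3 := by
      have h := amgm3' z₁ z₂ z₃ hz1p.le hz2p.le hz3p.le
      rw [key] at h
      linarith [e3t, h]
    have hnn : (0:ℝ) ≤ z₁ + z₂ + z₃ := by positivity
    exact le_of_pow_le_pow_left₀ (by norm_num : (3:ℕ) ≠ 0) hnn h27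
  -- main estimate: 4g + X₁₀ - 2 ≤ 3t
  have hxg : X₁₀ ≤ g := by
    rw [hgdef]
    nlinarith [mul_nonneg p1.le (mul_nonneg (sub_nonneg.2 g4.le) (sub_nonneg.2 g7.le)),
      mul_nonneg (sub_nonneg.2 g4.le) (sub_nonneg.2 g7.le)]
  have hcube : (4*g + X₁₀ - 2)^3 ≤ (3*t)^3 := by
    have h := chord3 g X₁₀ hg1 g10.le hxg
    linarith [e3t, h]
  have htnn : (0:ℝ) ≤ 3*t := by positivity
  have hmain : 4*g + X₁₀ - 2 ≤ 3*t :=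
    le_of_pow_le_pow_left₀ (by norm_num : (3:ℕ) ≠ 0) htnn hcube
  -- Σ ≤ g + 2
  have hsum : X₁ + X₄ + X₇ ≤ g + 2 := by
    rw [hgdef]
    nlinarith [mul_nonneg (sub_nonneg.2 h1.le) (sub_nonneg.2 g4.le),
      mul_nonneg (mul_nonneg (sub_nonneg.2 h1.le) (sub_nonneg.2 g4.le)) (sub_nonneg.2 g7.le),
      mul_nonneg (sub_nonneg.2 g4.le) (sub_nonneg.2 g7.le)]
  linarith
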